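/- Let ν be a Borel measure on ℝ^d \ {0} that is a mixture of Dirac measures along directions: ν(B) = ∫_S 1_B(g(ξ)ξ) g(ξ)^{-1} dλ(ξ) with λ finite on the unit sphere S and ε₀ < g < T₀ λ-a.e. (0 < ε₀ < 1 < T₀). Then the scaled superposition ν̃(B) = ∫_0^∞ ν({x : t^{-1}x ∈ B}) dt satisfies ν̃(B) = ∫_S ∫_0^∞ 1_B(rξ) r^{-2} dr dλ(ξ). -/

import Mathlib

open MeasureTheory Filter Set

noncomputable section

lemma stmt19_key {d : ℕ} (B : Set (EuclideanSpace ℝ (Fin d))) (c : ℝ) (hc : 0 < c)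
    (ξ : EuclideanSpace ℝ (Fin d)) :
    (∫⁻ t in Ioi (0:ℝ), B.indicator (fun _ => ENNReal.ofReal c⁻¹) (t⁻¹ • (c • ξ))) =
    ∫⁻ r in Ioi (0:ℝ), B.indicator (fun _ => ENNReal.ofReal (r ^ (-2:ℝ))) (r • ξ) := by
  have himg : (fun r : ℝ => c / r) '' Ioi 0 = Ioi 0 := by
    ext y; simp only [mem_image, mem_Ioi]
    constructor
    · rintro ⟨r, hr, rfl⟩; positivity
    · intro hy; exact ⟨c / y, by positivity, by field_simp⟩
  have hderiv : ∀ r ∈ Ioi (0:ℝ),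
      HasDerivWithinAt (fun r : ℝ => c / r) (-(c / r^2)) (Ioi 0) r := by
    intro r hr
    have h : HasDerivAt (fun r : ℝ => c * r⁻¹) (c * (-(r^2)⁻¹)) r :=
      (hasDerivAt_inv (ne_of_gt hr)).const_mul c
    have h2 : HasDerivAt (fun r : ℝ => c / r) (-(c / r^2)) r := by
      simpa [div_eq_mul_inv, mul_neg] using h
    exact h2.hasDerivWithinAt
  have hinj : InjOn (fun r : ℝ => c / r) (Ioi 0) := by
    intro a ha b hb h
    simp only [mem_Ioi] at ha hb
    field_simp at h
    linarith
  have hcv := lintegral_image_eq_lintegral_abs_det_fderiv_mul volume measurableSet_Ioi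
    (fun x hx => (hderiv x hx).hasFDerivWithinAt) hinj
    (fun t => B.indicator (fun _ => ENNReal.ofReal c⁻¹) (t⁻¹ • (c • ξ)))
  simp only [ContinuousLinearMap.det_toSpanSingleton, himg] at hcv
  rw [hcv]
  refine setLIntegral_congr_fun measurableSet_Ioi (fun r hr => ?_)
  have hr' : (0:ℝ) < r := hr
  have h1 : (c / r)⁻¹ • (c • ξ) = r • ξ := by
    rw [smul_smul]; congr 1; field_simp
  simp only [h1]
  have habs : |(-(c / r^2))| = c / r^2 := by
    rw [abs_neg, abs_of_nonneg (by positivity)]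
  rw [habs]
  by_cases hmem : r • ξ ∈ B
  · rw [Set.indicator_of_mem hmem, Set.indicator_of_mem hmem,
      ← ENNReal.ofReal_mul (by positivity)]
    congr 1
    rw [Real.rpow_neg hr'.le]
    rw [show (2:ℝ) = ((2:ℕ):ℝ) by norm_num, Real.rpow_natCast]
    field_simp
  · simp [Set.indicator_of_notMem hmem]

/-- let `ν(B) = ∫_S 1_B(g(ξ)ξ) g(ξ)⁻¹ dλ(ξ)` (the pushforward of
`g⁻¹·λ` under `ξ ↦ g(ξ)ξ`), with `λ` finite on the unit sphere and `ε₀ < g < T₀`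
λ-a.e. Then the scaled superposition `ν̃(B) = ∫_0^∞ ν({x : t⁻¹x ∈ B}) dt` satisfies
`ν̃(B) = ∫_S ∫_0^∞ 1_B(rξ) r^{-2} dr dλ(ξ)`. -/
theorem stmt19 {d : ℕ}
    (lam : Measure (EuclideanSpace ℝ (Fin d))) [IsFiniteMeasure lam]
    (hsphere : lam (Metric.sphere (0 : EuclideanSpace ℝ (Fin d)) 1)ᶜ = 0)
    (ε₀ T₀ : ℝ) (hε₀ : 0 < ε₀) (hε₁ : ε₀ < 1) (hT₀ : 1 < T₀)
    (g : EuclideanSpace ℝ (Fin d) → ℝ) (hg : Measurable g)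
    (hbd : ∀ᵐ ξ ∂lam, ε₀ < g ξ ∧ g ξ < T₀)
    (ν : Measure (EuclideanSpace ℝ (Fin d)))
    (hν : ν = Measure.map (fun ξ => g ξ • ξ)
      (lam.withDensity fun ξ => ENNReal.ofReal (g ξ)⁻¹))
    (B : Set (EuclideanSpace ℝ (Fin d))) (hB : MeasurableSet B)
    (hB0 : (0 : EuclideanSpace ℝ (Fin d)) ∉ B) :
    (∫⁻ t in Ioi (0:ℝ), ν {x | t⁻¹ • x ∈ B}) =
      ∫⁻ ξ, (∫⁻ r in Ioi (0:ℝ),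
        B.indicator (fun _ => ENNReal.ofReal (r ^ (-2 : ℝ))) (r • ξ)) ∂lam := by
  have hmapm : Measurable (fun ξ : EuclideanSpace ℝ (Fin d) => g ξ • ξ) :=
    hg.smul measurable_id
  have hSm : MeasurableSet {p : ℝ × EuclideanSpace ℝ (Fin d) | p.1⁻¹ • (g p.2 • p.2) ∈ B} :=
    (measurable_fst.inv.smul ((hg.comp measurable_snd).smul measurable_snd)) hB
  have hfm : Measurable (fun p : ℝ × EuclideanSpace ℝ (Fin d) =>
      Set.indicator {p : ℝ × EuclideanSpace ℝ (Fin d) | p.1⁻¹ • (g p.2 • p.2) ∈ B}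
        (fun p => ENNReal.ofReal (g p.2)⁻¹) p) :=
    (ENNReal.measurable_ofReal.comp (hg.comp measurable_snd).inv).indicator hSm
  have hind : ∀ (t : ℝ) (ξ : EuclideanSpace ℝ (Fin d)),
      Set.indicator {p : ℝ × EuclideanSpace ℝ (Fin d) | p.1⁻¹ • (g p.2 • p.2) ∈ B}
        (fun p => ENNReal.ofReal (g p.2)⁻¹) (t, ξ) =
      B.indicator (fun _ => ENNReal.ofReal (g ξ)⁻¹) (t⁻¹ • (g ξ • ξ)) := by
    intro t ξ
    by_cases h : t⁻¹ • (g ξ • ξ) ∈ B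
    · rw [Set.indicator_of_mem h, Set.indicator_of_mem (by exact h)]
    · rw [Set.indicator_of_notMem h, Set.indicator_of_notMem (by exact h)]
  have step1 : (∫⁻ t in Ioi (0:ℝ), ν {x | t⁻¹ • x ∈ B}) =
      ∫⁻ t in Ioi (0:ℝ), ∫⁻ ξ,
        Set.indicator {p : ℝ × EuclideanSpace ℝ (Fin d) | p.1⁻¹ • (g p.2 • p.2) ∈ B}
          (fun p => ENNReal.ofReal (g p.2)⁻¹) (t, ξ) ∂lam := by
    refine lintegral_congr fun t => ?_
    have hBt : MeasurableSet {x : EuclideanSpace ℝ (Fin d) | t⁻¹ • x ∈ B} :=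
      (measurable_const_smul t⁻¹) hB
    rw [hν, Measure.map_apply hmapm hBt, withDensity_apply _ (hmapm hBt),
      ← lintegral_indicator (hmapm hBt)]
    refine lintegral_congr fun ξ => ?_
    by_cases h : t⁻¹ • (g ξ • ξ) ∈ B
    · rw [Set.indicator_of_mem (by exact h), Set.indicator_of_mem (by exact h)]
    · rw [Set.indicator_of_notMem (by exact h), Set.indicator_of_notMem (by exact h)]
  rw [step1, lintegral_lintegral_swap hfm.aemeasurable]
  refine lintegral_congr_ae ?_
  filter_upwards [hbd] with ξ hξ
  have hc : 0 < g ξ := lt_trans hε₀ hξ.1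
  calc (∫⁻ t in Ioi (0:ℝ),
      Set.indicator {p : ℝ × EuclideanSpace ℝ (Fin d) | p.1⁻¹ • (g p.2 • p.2) ∈ B}
        (fun p => ENNReal.ofReal (g p.2)⁻¹) (t, ξ))
      = ∫⁻ t in Ioi (0:ℝ), B.indicator (fun _ => ENNReal.ofReal (g ξ)⁻¹) (t⁻¹ • (g ξ • ξ)) :=
        lintegral_congr fun t => hind t ξ
    _ = _ := stmt19_key B (g ξ) hc ξ
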